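/- Let H be a τ-quasinormal subgroup of a finite group G and N a normal subgroup of G with gcd(|H|, |N|) = 1. Then HN/N is τ-quasinormal in G/N. -/

import Mathlib

open scoped Pointwise

/-- `H` is τ-quasinormal in `G` if it permutes with every Sylow `q`-subgroup `Q` of `G`
such that `q ∤ |H|` and `gcd(|H|, |Q^G|) ≠ 1`. -/
def TauQuasinormal (G : Type*) [Group G] (H : Subgroup G) : Prop :=
  ∀ (q : ℕ), q.Prime → ∀ Q : Sylow q G,
    ¬ q ∣ Nat.card H →
    Nat.gcd (Nat.card H) (Nat.card (Subgroup.normalClosure ((Q : Subgroup G) : Set G))) ≠ 1 →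
    (H : Set G) * ((Q : Subgroup G) : Set G) = ((Q : Subgroup G) : Set G) * (H : Set G)

/-- If `H` is τ-quasinormal in a finite group `G` and `N ⊴ G` with `gcd(|H|,|N|) = 1`,
then `HN/N` is τ-quasinormal in `G/N`. -/
theorem tauQuasinormal_quotient_coprime {G : Type*} [Group G] [Finite G] (H N : Subgroup G)
    [N.Normal] (hco : Nat.Coprime (Nat.card H) (Nat.card N)) (hH : TauQuasinormal G H) :
    TauQuasinormal (G ⧸ N) (H.map (QuotientGroup.mk' N)) := by
  intro q hq Q hq1 hq2
  haveI : Fact q.Prime := ⟨hq⟩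
  set f := QuotientGroup.mk' N with hf
  have hfs : Function.Surjective f := QuotientGroup.mk'_surjective N
  -- card of image equals card of H
  have hbij : Function.Bijective (f.subgroupMap H) := by
    refine ⟨?_, f.subgroupMap_surjective H⟩
    have hbot : H ⊓ N = ⊥ := Subgroup.inf_eq_bot_of_coprime hco
    rw [injective_iff_map_eq_one]
    intro a ha
    have h1 : f a.1 = 1 := congrArg Subtype.val ha
    have h2 : (a.1 : G) ∈ N := by
      rwa [← QuotientGroup.ker_mk' N, MonoidHom.mem_ker]
    have : (a.1 : G) ∈ H ⊓ N := ⟨a.2, h2⟩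
    rw [hbot, Subgroup.mem_bot] at this
    exact Subtype.ext this
  have hcard : Nat.card (H.map f) = Nat.card H :=
    (Nat.card_eq_of_bijective _ hbij).symm
  -- lift the Sylow subgroup
  obtain ⟨P, hP⟩ := Sylow.mapSurjective_surjective hfs q Q
  have hQP : (Q : Subgroup (G ⧸ N)) = (P : Subgroup G).map f := by
    rw [← hP, Sylow.coe_mapSurjective]
  -- hypotheses for P
  have hq1' : ¬ q ∣ Nat.card H := by rwa [← hcard]
  have hq2' : Nat.gcd (Nat.card H)
      (Nat.card (Subgroup.normalClosure ((P : Subgroup G) : Set G))) ≠ 1 := by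
    intro hcop
    apply hq2
    rw [hcard, hQP, Subgroup.coe_map,
      ← Subgroup.map_normalClosure ((P : Subgroup G) : Set G) f hfs]
    have hdvd : Nat.card ((Subgroup.normalClosure ((P : Subgroup G) : Set G)).map f) ∣
        Nat.card (Subgroup.normalClosure ((P : Subgroup G) : Set G)) :=
      Subgroup.card_dvd_of_surjective _ (f.subgroupMap_surjective _)
    exact Nat.Coprime.coprime_dvd_right hdvd hcop
  have hcomm := hH q hq P hq1' hq2'
  rw [hQP, Subgroup.coe_map, Subgroup.coe_map, ← Set.image_mul, ← Set.image_mul, hcomm]
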